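/- Let 1 ≤ q₋ < r < q₊ ≤ ∞ and let {f_z : z = (w,t) ∈ ℝ^d × (0,∞)} be a family of functions in L^{q₋}(ℝ^d) ∩ L^{q₊}(ℝ^d) such that (i) ‖f_z‖_{L^r} is uniformly bounded, (ii) there exists β > 0 with ‖f_z‖_{L^{q₋}} ≲ t^β and ‖f_z‖_{L^{q₊}} ≲ t^{-β}, and (iii) there exists c > 0 such that |f_z(x)| ≲ t^{-d/r} (1 + |x-w|²/t²)^{-1/2} whenever |x-w| ≥ c·t. Then for every g ∈ L^{r'}(ℝ^d) (with 1/r + 1/r' = 1), the pairing ⟨f_z, g⟩ = ∫ f_z g tends to 0 as z → ∞, i.e. for every ε > 0 there exists M such that |⟨f_z,g⟩| < ε whenever t < 2^{-M}, or t > 2^M, or |w| > 2^M. -/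

import Mathlib

open MeasureTheory Real Filter
open scoped ENNReal

lemma holder_pairing {α : Type*} [MeasurableSpace α] {μ : Measure α} {p p' : ℝ≥0∞}
    (hpp' : 1 / p + 1 / p' = 1) {u v : α → ℝ} (hu : MemLp u p μ) (hv : MemLp v p' μ) :
    Integrable (fun x => u x * v x) μ ∧
    |∫ x, u x * v x ∂μ| ≤ (eLpNorm u p μ).toReal * (eLpNorm v p' μ).toReal := by
  have hol : eLpNorm (fun x => u x * v x) 1 μ ≤ eLpNorm u p μ * eLpNorm v p' μ := by
    haveI : ENNReal.HolderTriple p p' 1 := ⟨by simpa using hpp'⟩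
    simpa using eLpNorm_le_eLpNorm_mul_eLpNorm_of_nnnorm hu.1 hv.1 (· * ·) 1
      (Filter.Eventually.of_forall fun x => by simp [nnnorm_mul])
  have hfin : eLpNorm u p μ * eLpNorm v p' μ < ∞ := ENNReal.mul_lt_top hu.2 hv.2
  have mem1 : MemLp (fun x => u x * v x) 1 μ := ⟨hu.1.mul hv.1, hol.trans_lt hfin⟩
  have hint : Integrable (fun x => u x * v x) μ := memLp_one_iff_integrable.mp mem1
  refine ⟨hint, ?_⟩
  have h1 : |∫ x, u x * v x ∂μ| ≤ ∫ x, ‖u x * v x‖ ∂μ := by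
    simpa [Real.norm_eq_abs] using norm_integral_le_integral_norm (fun x => u x * v x) (μ := μ)
  have h2 : ∫ x, ‖u x * v x‖ ∂μ = (eLpNorm (fun x => u x * v x) 1 μ).toReal := by
    rw [integral_norm_eq_lintegral_enorm hint.1, eLpNorm_one_eq_lintegral_enorm]
  refine h1.trans ?_
  rw [h2, ← ENNReal.toReal_mul]
  exact ENNReal.toReal_mono hfin.ne hol

lemma memℒp_interp {α : Type*} [MeasurableSpace α] {μ : Measure α} {f : α → ℝ}
    {p q r : ℝ≥0∞} (hp : 1 ≤ p) (hpr : p ≤ r) (hrq : r ≤ q) (hr : r ≠ ∞)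
    (hfp : MemLp f p μ) (hfq : MemLp f q μ) : MemLp f r μ := by
  have hp0 : p ≠ 0 := (lt_of_lt_of_le zero_lt_one hp).ne'
  have hr0 : r ≠ 0 := (lt_of_lt_of_le zero_lt_one (hp.trans hpr)).ne'
  have hptop : p ≠ ∞ := fun h => hr (top_le_iff.mp (h ▸ hpr))
  set f' := hfp.1.mk f with hf'def
  have hf'm : StronglyMeasurable f' := hfp.1.stronglyMeasurable_mk
  have hae : f =ᵐ[μ] f' := hfp.1.ae_eq_mk
  have hfp' : MemLp f' p μ := hfp.ae_eq hae
  have hfq' : MemLp f' q μ := hfq.ae_eq hae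
  set S : Set α := {x | (1 : ℝ≥0∞) ≤ (‖f' x‖₊ : ℝ≥0∞)} with hSdef
  have hSmeas : MeasurableSet S := by
    have : Measurable fun x => (‖f' x‖₊ : ℝ≥0∞) := hf'm.measurable.enorm
    exact this measurableSet_Ici
  have hSfin : μ S < ∞ := hfp'.meas_ge_lt_top' hp0 hptop one_ne_zero
  have m1 : MemLp (S.indicator f') r μ :=
    (hfq'.indicator hSmeas).mono_exponent_of_measure_support_ne_top
      (fun x hx => Set.indicator_of_notMem hx f') hSfin.ne hrq
  have m2 : MemLp (Sᶜ.indicator f') r μ := by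
    have hmeas2 : AEStronglyMeasurable (Sᶜ.indicator f') μ :=
      (hf'm.indicator hSmeas.compl).aestronglyMeasurable
    have hb : ∀ x, (‖Sᶜ.indicator f' x‖₊ : ℝ≥0∞) ≤ 1 := by
      intro x
      by_cases hx : x ∈ Sᶜ
      · have : ¬ (1 : ℝ≥0∞) ≤ (‖f' x‖₊ : ℝ≥0∞) := hx
        simp only [Set.indicator_of_mem hx]
        exact (not_le.mp this).le
      · simp [Set.indicator_of_notMem hx]
    have hmem2p : MemLp (Sᶜ.indicator f') p μ := hfp'.indicator hSmeas.compl
    have hIp : ∫⁻ x, (‖Sᶜ.indicator f' x‖₊ : ℝ≥0∞) ^ p.toReal ∂μ < ∞ :=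
      lintegral_rpow_enorm_lt_top_of_eLpNorm_lt_top hp0 hptop hmem2p.2
    have hIr : ∫⁻ x, (‖Sᶜ.indicator f' x‖₊ : ℝ≥0∞) ^ r.toReal ∂μ < ∞ := by
      refine lt_of_le_of_lt (lintegral_mono fun x => ?_) hIp
      exact ENNReal.rpow_le_rpow_of_exponent_ge (hb x)
        (ENNReal.toReal_mono hr hpr)
    refine ⟨hmeas2, ?_⟩
    rw [eLpNorm_eq_lintegral_rpow_enorm_toReal hr0 hr]
    exact ENNReal.rpow_lt_top_of_nonneg (by positivity) hIr.ne
  have : MemLp f' r μ := by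
    have := m1.add m2
    rwa [Set.indicator_self_add_compl S f'] at this
  exact this.ae_eq hae.symm

set_option maxHeartbeats 2000000 in
/-- Weak convergence lemma: a family `f_z` uniformly bounded in `L^r`, small in
`L^{qm}`/`L^{qp}` at small/large scales, and pointwise decaying off `B(w, ct)`,
pairs to zero with any `g ∈ L^{r'}` as `z → ∞`. -/
theorem stmt0
    (d : ℕ) (hd : 1 ≤ d)
    (qm qp r r' : ℝ≥0∞)
    (hq : 1 ≤ qm) (hqmr : qm < r) (hrqp : r < qp)
    (hconj : 1 / r + 1 / r' = 1)
    (f : (EuclideanSpace ℝ (Fin d) × ℝ) → EuclideanSpace ℝ (Fin d) → ℝ)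
    (hmem : ∀ w t, 0 < t → MemLp (f (w, t)) qm volume ∧ MemLp (f (w, t)) qp volume)
    (A : ℝ) (hA : ∀ w t, 0 < t → (eLpNorm (f (w, t)) r volume).toReal ≤ A)
    (β : ℝ) (hβ : 0 < β) (C₂ : ℝ)
    (hlow : ∀ w t, 0 < t → (eLpNorm (f (w, t)) qm volume).toReal ≤ C₂ * t ^ β)
    (hhigh : ∀ w t, 0 < t → (eLpNorm (f (w, t)) qp volume).toReal ≤ C₂ * t ^ (-β))
    (c : ℝ) (hc : 0 < c) (C₃ : ℝ)
    (hdecay : ∀ w t x, 0 < t → c * t ≤ ‖x - w‖ →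
      |f (w, t) x| ≤ C₃ * t ^ (-((d : ℝ) / r.toReal)) * (1 + ‖x - w‖ ^ 2 / t ^ 2) ^ (-(1 : ℝ) / 2))
    (g : EuclideanSpace ℝ (Fin d) → ℝ) (hg : MemLp g r' volume) :
    ∀ ε > 0, ∃ M : ℝ, ∀ w t, 0 < t →
      (t < 2 ^ (-M) ∨ 2 ^ M < t ∨ 2 ^ M < ‖w‖) →
      |∫ x, f (w, t) x * g x| < ε := by
  intro ε hε
  -- basic exponent facts
  have hr1 : 1 < r := lt_of_le_of_lt hq hqmr
  have hrtop : r ≠ ∞ := (lt_of_lt_of_le hrqp le_top).ne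
  have hr0 : r ≠ 0 := (zero_lt_one.trans hr1).ne'
  have hrt : 0 < r.toReal := ENNReal.toReal_pos hr0 hrtop
  have hr'top : r' ≠ ∞ := by
    intro h
    rw [h] at hconj
    simp only [ENNReal.div_top, add_zero, one_div] at hconj
    have : r = 1 := by simpa using congrArg (·⁻¹) hconj
    exact hr1.ne' this
  have memr : ∀ w t, 0 < t → MemLp (f (w, t)) r volume := fun w t ht =>
    memℒp_interp hq hqmr.le hrqp.le hrtop (hmem w t ht).1 (hmem w t ht).2
  have hA0 : 0 ≤ A := le_trans ENNReal.toReal_nonneg (hA 0 1 one_pos)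
  -- approximation of g
  have hδpos : 0 < ε / (2 * (A + 1)) := by positivity
  obtain ⟨g₁, hg₁supp, hsub, hg₁cont, _⟩ :=
    hg.exists_hasCompactSupport_eLpNorm_sub_le hr'top
      (ε := ENNReal.ofReal (ε / (2 * (A + 1)))) ((ENNReal.ofReal_pos.mpr hδpos).ne')
  have hg₁memAll : ∀ p : ℝ≥0∞, MemLp g₁ p volume := fun p =>
    hg₁cont.memLp_of_hasCompactSupport hg₁supp
  have hg₁mem : MemLp g₁ r' volume := hg₁memAll r'
  have hgg₁ : MemLp (g - g₁) r' volume := hg.sub hg₁mem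
  -- the error term is < ε/2
  have herr : ∀ w t, 0 < t → |∫ x, f (w, t) x * (g x - g₁ x)| < ε / 2 := by
    intro w t ht
    have h1 := holder_pairing hconj (memr w t ht) hgg₁
    have h2 : |∫ x, f (w, t) x * (g x - g₁ x)| ≤
        (eLpNorm (f (w, t)) r volume).toReal * (eLpNorm (g - g₁) r' volume).toReal := h1.2
    have h3 : (eLpNorm (g - g₁) r' volume).toReal ≤ ε / (2 * (A + 1)) :=
      ENNReal.toReal_le_of_le_ofReal hδpos.le hsub
    have h4 : |∫ x, f (w, t) x * (g x - g₁ x)| ≤ A * (ε / (2 * (A + 1))) :=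
      h2.trans (mul_le_mul (hA w t ht) h3 ENNReal.toReal_nonneg hA0)
    have h5 : A * (ε / (2 * (A + 1))) < (A + 1) * (ε / (2 * (A + 1))) :=
      mul_lt_mul_of_pos_right (lt_add_one A) hδpos
    have h6 : (A + 1) * (ε / (2 * (A + 1))) = ε / 2 := by
      field_simp
    linarith
  -- integrability of both pieces and splitting
  have hsplit : ∀ w t, 0 < t → |∫ x, f (w, t) x * g x| ≤
      |∫ x, f (w, t) x * (g x - g₁ x)| + |∫ x, f (w, t) x * g₁ x| := by
    intro w t ht
    have h1 := (holder_pairing hconj (memr w t ht) hgg₁).1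
    have h1' : Integrable (fun x => f (w, t) x * (g x - g₁ x)) volume := by
      simpa [Pi.sub_apply] using h1
    have h2 := (holder_pairing hconj (memr w t ht) hg₁mem).1
    have heq : ∫ x, f (w, t) x * g x =
        (∫ x, f (w, t) x * (g x - g₁ x)) + ∫ x, f (w, t) x * g₁ x := by
      rw [← integral_add h1' h2]
      congr 1
      funext x
      ring
    rw [heq]
    exact abs_add_le _ _
  -- main reduction: it suffices to handle g₁
  suffices h : ∃ M : ℝ, ∀ w t, 0 < t →
      (t < 2 ^ (-M) ∨ 2 ^ M < t ∨ 2 ^ M < ‖w‖) →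
      |∫ x, f (w, t) x * g₁ x| < ε / 2 by
    obtain ⟨M, hM⟩ := h
    refine ⟨M, fun w t ht hcond => ?_⟩
    have := hsplit w t ht
    have h1 := herr w t ht
    have h2 := hM w t ht hcond
    linarith
  clear hsplit herr hgg₁ hg hsub
  -- support radius of g₁
  obtain ⟨R, hR0, hRsupp⟩ : ∃ R : ℝ, 0 ≤ R ∧ ∀ x, g₁ x ≠ 0 → ‖x‖ ≤ R := by
    obtain ⟨R₀, hR₀⟩ := hg₁supp.isBounded.subset_closedBall 0
    refine ⟨max R₀ 0, le_max_right _ _, fun x hx => ?_⟩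
    have hx' : x ∈ tsupport g₁ := subset_tsupport g₁ (by simpa [Function.mem_support] using hx)
    have h2 := hR₀ hx'
    rw [Metric.mem_closedBall, dist_zero_right] at h2
    exact h2.trans (le_max_left _ _)
  -- conjugate exponents of qm and qp
  set qmc : ℝ≥0∞ := (1 - 1/qm)⁻¹ with hqmcdef
  have hqmconj : 1/qm + 1/qmc = 1 := by
    have h1 : 1/qm ≤ 1 := by rw [one_div]; exact ENNReal.inv_le_one.mpr hq
    rw [hqmcdef]
    simp only [one_div, inv_inv] at h1 ⊢
    exact add_tsub_cancel_of_le h1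
  have hqp1 : (1:ℝ≥0∞) ≤ qp := (hr1.trans hrqp).le
  set qpc : ℝ≥0∞ := (1 - 1/qp)⁻¹ with hqpcdef
  have hqpconj : 1/qp + 1/qpc = 1 := by
    have h1 : 1/qp ≤ 1 := by rw [one_div]; exact ENNReal.inv_le_one.mpr hqp1
    rw [hqpcdef]
    simp only [one_div, inv_inv] at h1 ⊢
    exact add_tsub_cancel_of_le h1
  set N₁ : ℝ := (eLpNorm g₁ qmc volume).toReal with hN₁def
  set N₂ : ℝ := (eLpNorm g₁ qpc volume).toReal with hN₂def
  set N₃ : ℝ := ∫ x, |g₁ x| with hN₃def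
  have hN₁0 : 0 ≤ N₁ := ENNReal.toReal_nonneg
  have hN₂0 : 0 ≤ N₂ := ENNReal.toReal_nonneg
  have hN₃0 : 0 ≤ N₃ := integral_nonneg fun x => abs_nonneg _
  have hg₁int : Integrable g₁ volume := memLp_one_iff_integrable.mp (hg₁memAll 1)
  have hC₂0 : 0 ≤ C₂ := by
    have h1 := hlow 0 1 one_pos
    rw [Real.one_rpow, mul_one] at h1
    exact le_trans ENNReal.toReal_nonneg h1
  -- small-t and large-t bounds
  have hsmall : ∀ w t, 0 < t → |∫ x, f (w, t) x * g₁ x| ≤ C₂ * t ^ β * N₁ := by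
    intro w t ht
    refine ((holder_pairing hqmconj (hmem w t ht).1 (hg₁memAll qmc)).2).trans ?_
    exact mul_le_mul_of_nonneg_right (hlow w t ht) hN₁0
  have hlarge : ∀ w t, 0 < t → |∫ x, f (w, t) x * g₁ x| ≤ C₂ * t ^ (-β) * N₂ := by
    intro w t ht
    refine ((holder_pairing hqpconj (hmem w t ht).2 (hg₁memAll qpc)).2).trans ?_
    exact mul_le_mul_of_nonneg_right (hhigh w t ht) hN₂0
  -- threshold η
  set X : ℝ := (C₂ + 1) * (N₁ + N₂ + 1) with hXdef
  have hXpos : 0 < X := by positivity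
  set Q : ℝ := ε / (2 * X) with hQdef
  have hQpos : 0 < Q := by positivity
  set η : ℝ := Q ^ β⁻¹ with hηdef
  have hηpos : 0 < η := Real.rpow_pos_of_pos hQpos _
  have hηβ : η ^ β = Q := Real.rpow_inv_rpow hQpos.le hβ.ne'
  have hXQ : X * Q = ε / 2 := by
    rw [hQdef]
    field_simp
  have hkey1 : ∀ t : ℝ, 0 < t → t < η → C₂ * t ^ β * N₁ < ε / 2 := by
    intro t ht htη
    have h1 : t ^ β ≤ η ^ β := Real.rpow_le_rpow ht.le htη.le hβ.le
    have h2 : C₂ * t ^ β * N₁ ≤ C₂ * N₁ * Q := by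
      rw [← hηβ]
      calc C₂ * t ^ β * N₁ = C₂ * N₁ * t ^ β := by ring
        _ ≤ C₂ * N₁ * η ^ β := mul_le_mul_of_nonneg_left h1 (mul_nonneg hC₂0 hN₁0)
    have h3 : C₂ * N₁ * Q < X * Q := by
      have : C₂ * N₁ < X := by
        rw [hXdef]
        have e1 : C₂ * N₁ ≤ C₂ * (N₁ + N₂ + 1) :=
          mul_le_mul_of_nonneg_left (by linarith) hC₂0
        have e2 : C₂ * (N₁ + N₂ + 1) < (C₂ + 1) * (N₁ + N₂ + 1) :=
          mul_lt_mul_of_pos_right (lt_add_one C₂) (by linarith)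
        linarith
      exact mul_lt_mul_of_pos_right this hQpos
    linarith [hXQ]
  have hkey2 : ∀ t : ℝ, 0 < t → η⁻¹ < t → C₂ * t ^ (-β) * N₂ < ε / 2 := by
    intro t ht hlt
    have h0 : t ^ (-β) = (t ^ β)⁻¹ := by rw [Real.rpow_neg ht.le]
    have h1 : Q⁻¹ < t ^ β := by
      have h2 : (η⁻¹ : ℝ) ^ β < t ^ β :=
        Real.rpow_lt_rpow (inv_nonneg.mpr hηpos.le) hlt hβ
      rwa [Real.inv_rpow hηpos.le, hηβ] at h2
    have h2 : (t ^ β)⁻¹ < Q := by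
      have h3 := inv_strictAnti₀ (inv_pos.mpr hQpos) h1
      rwa [inv_inv] at h3
    have h4 : C₂ * t ^ (-β) * N₂ ≤ C₂ * N₂ * Q := by
      rw [h0]
      calc C₂ * (t ^ β)⁻¹ * N₂ = C₂ * N₂ * (t ^ β)⁻¹ := by ring
        _ ≤ C₂ * N₂ * Q := mul_le_mul_of_nonneg_left h2.le (mul_nonneg hC₂0 hN₂0)
    have h6 : C₂ * N₂ * Q < X * Q := by
      have : C₂ * N₂ < X := by
        rw [hXdef]
        have e1 : C₂ * N₂ ≤ C₂ * (N₁ + N₂ + 1) :=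
          mul_le_mul_of_nonneg_left (by linarith) hC₂0
        have e2 : C₂ * (N₁ + N₂ + 1) < (C₂ + 1) * (N₁ + N₂ + 1) :=
          mul_lt_mul_of_pos_right (lt_add_one C₂) (by linarith)
        linarith
      exact mul_lt_mul_of_pos_right this hQpos
    linarith [hXQ]
  -- choose M₀, then M
  set M₀ : ℝ := max 1 (Real.logb 2 η⁻¹) with hM₀def
  have h2M₀pos : (0:ℝ) < 2 ^ M₀ := Real.rpow_pos_of_pos two_pos _
  have h2M₀ : η⁻¹ ≤ 2 ^ M₀ := by
    calc η⁻¹ = 2 ^ Real.logb 2 η⁻¹ :=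
          (Real.rpow_logb two_pos (by norm_num) (inv_pos.mpr hηpos)).symm
      _ ≤ 2 ^ M₀ := Real.rpow_le_rpow_of_exponent_le one_le_two (le_max_right _ _)
  have h2M₀η : (2:ℝ) ^ (-M₀) ≤ η := by
    rw [Real.rpow_neg (by norm_num : (0:ℝ) ≤ 2), ← inv_inv η]
    exact inv_anti₀ (inv_pos.mpr hηpos) h2M₀
  set K : ℝ := (2:ℝ) ^ (M₀ * ((d:ℝ) / r.toReal)) with hKdef
  have hKpos : 0 < K := Real.rpow_pos_of_pos two_pos _
  set P : ℝ := (|C₃| + 1) * K * 2 ^ M₀ * (N₃ + 1) with hPdef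
  have hPpos : 0 < P := by positivity
  set T : ℝ := R + c * 2 ^ M₀ + 1 + 4 * P / ε with hTdef
  have hTpos : 0 < T := by positivity
  set M : ℝ := max M₀ (Real.logb 2 T) with hMdef
  have hM₀M : M₀ ≤ M := le_max_left _ _
  have h2MT : T ≤ 2 ^ M := by
    calc T = 2 ^ Real.logb 2 T := (Real.rpow_logb two_pos (by norm_num) hTpos).symm
      _ ≤ 2 ^ M := Real.rpow_le_rpow_of_exponent_le one_le_two (le_max_right _ _)
  refine ⟨M, fun w t ht hcond => ?_⟩
  by_cases hts : t < 2 ^ (-M₀)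
  · exact (hsmall w t ht).trans_lt (hkey1 t ht (lt_of_lt_of_le hts h2M₀η))
  by_cases htl : (2:ℝ) ^ M₀ < t
  · exact (hlarge w t ht).trans_lt (hkey2 t ht (lt_of_le_of_lt h2M₀ htl))
  push_neg at hts htl
  have hw : 2 ^ M < ‖w‖ := by
    rcases hcond with h | h | h
    · exfalso
      have h2 : (2:ℝ) ^ (-M) ≤ 2 ^ (-M₀) :=
        Real.rpow_le_rpow_of_exponent_le one_le_two (by linarith)
      linarith
    · exfalso
      have h2 : (2:ℝ) ^ M₀ ≤ 2 ^ M :=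
        Real.rpow_le_rpow_of_exponent_le one_le_two hM₀M
      linarith
    · exact h
  -- decay regime
  have hcPe : 0 < 4 * P / ε := by positivity
  have hc2M₀ : 0 < c * 2 ^ M₀ := mul_pos hc h2M₀pos
  set D : ℝ := 2 ^ M - R with hDdef
  have hD : c * 2 ^ M₀ + 1 + 4 * P / ε ≤ D := by
    rw [hDdef]; rw [hTdef] at h2MT; linarith
  have hDpos : 0 < D := by linarith
  set coeff : ℝ := |C₃| * K * (2 ^ M₀ / D) with hcoefdef
  have hcoef0 : 0 ≤ coeff := by positivity
  have hpt : ∀ x, |f (w, t) x * g₁ x| ≤ coeff * |g₁ x| := by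
    intro x
    by_cases hx : g₁ x = 0
    · simp [hx]
    · have hxR : ‖x‖ ≤ R := hRsupp x hx
      have hsx : D < ‖x - w‖ := by
        have h1 : ‖w‖ - ‖x‖ ≤ ‖x - w‖ := by
          rw [norm_sub_rev]; exact norm_sub_norm_le w x
        rw [hDdef]; linarith
      have hct : c * t ≤ ‖x - w‖ := by
        have h1 : c * t ≤ c * 2 ^ M₀ := mul_le_mul_of_nonneg_left htl hc.le
        linarith
      have hdec := hdecay w t x ht hct
      have hspos : 0 < ‖x - w‖ := lt_trans hDpos hsx
      have ha : t ^ (-((d:ℝ) / r.toReal)) ≤ K := by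
        have h1 : ((2:ℝ) ^ (-M₀)) ^ (-((d:ℝ)/r.toReal)) = K := by
          rw [hKdef, ← Real.rpow_mul (by norm_num : (0:ℝ) ≤ 2)]
          congr 1; ring
        rw [← h1]
        refine Real.rpow_le_rpow_of_nonpos (Real.rpow_pos_of_pos two_pos _) hts ?_
        have : (0:ℝ) ≤ (d:ℝ) / r.toReal := div_nonneg (Nat.cast_nonneg d) hrt.le
        linarith
      have hb : (1 + ‖x - w‖ ^ 2 / t ^ 2) ^ (-(1:ℝ) / 2) ≤ t / ‖x - w‖ := by
        have hu : 0 < ‖x - w‖ ^ 2 / t ^ 2 := by positivity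
        have h1 : (1 + ‖x - w‖ ^ 2 / t ^ 2) ^ (-(1:ℝ)/2) ≤
            (‖x - w‖ ^ 2 / t ^ 2) ^ (-(1:ℝ)/2) :=
          Real.rpow_le_rpow_of_nonpos hu (by linarith) (by norm_num)
        have h2 : (‖x - w‖ ^ 2 / t ^ 2 : ℝ) ^ (-(1:ℝ)/2) = t / ‖x - w‖ := by
          rw [← div_pow, ← Real.rpow_natCast (‖x - w‖ / t) 2,
            ← Real.rpow_mul (by positivity)]
          have h3 : ((2:ℕ):ℝ) * (-(1:ℝ)/2) = -1 := by norm_num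
          rw [h3, Real.rpow_neg_one, inv_div]
        rwa [h2] at h1
      have habs : |f (w, t) x| ≤ coeff := by
        have hX : (0:ℝ) ≤ t ^ (-((d:ℝ)/r.toReal)) := Real.rpow_nonneg ht.le _
        have hY : (0:ℝ) ≤ (1 + ‖x - w‖ ^ 2 / t ^ 2) ^ (-(1:ℝ)/2) :=
          Real.rpow_nonneg (by positivity) _
        have hts' : (0:ℝ) ≤ t / ‖x - w‖ := by positivity
        have hdiv : t / ‖x - w‖ ≤ 2 ^ M₀ / D := div_le_div₀ h2M₀pos.le htl hDpos hsx.le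
        calc |f (w, t) x| ≤ C₃ * t ^ (-((d:ℝ)/r.toReal)) *
              (1 + ‖x - w‖ ^ 2 / t ^ 2) ^ (-(1:ℝ)/2) := hdec
          _ ≤ |C₃| * t ^ (-((d:ℝ)/r.toReal)) *
              (1 + ‖x - w‖ ^ 2 / t ^ 2) ^ (-(1:ℝ)/2) :=
            mul_le_mul_of_nonneg_right
              (mul_le_mul_of_nonneg_right (le_abs_self C₃) hX) hY
          _ ≤ |C₃| * K * (t / ‖x - w‖) :=
            mul_le_mul (mul_le_mul_of_nonneg_left ha (abs_nonneg C₃)) hb hY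
              (by positivity)
          _ ≤ coeff := by
            rw [hcoefdef]
            exact mul_le_mul_of_nonneg_left hdiv (by positivity)
      rw [abs_mul]
      exact mul_le_mul_of_nonneg_right habs (abs_nonneg _)
  have hint := (holder_pairing hconj (memr w t ht) hg₁mem).1
  have hi1 : |∫ x, f (w, t) x * g₁ x| ≤ ∫ x, |f (w, t) x * g₁ x| := by
    simpa [Real.norm_eq_abs, abs_mul] using
      norm_integral_le_integral_norm (μ := volume) (fun x => f (w, t) x * g₁ x)
  have hi2 : ∫ x, |f (w, t) x * g₁ x| ≤ ∫ x, coeff * |g₁ x| :=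
    integral_mono hint.abs (hg₁int.abs.const_mul coeff) hpt
  have hi3 : ∫ x, coeff * |g₁ x| = coeff * N₃ := by
    rw [MeasureTheory.integral_const_mul]
  have hfin : coeff * N₃ < ε / 2 := by
    have h1 : coeff * N₃ = (|C₃| * K * 2 ^ M₀ * N₃) / D := by
      rw [hcoefdef]; ring
    have h2 : |C₃| * K * 2 ^ M₀ * N₃ ≤ P := by
      rw [hPdef]
      refine mul_le_mul ?_ (by linarith) hN₃0 (by positivity)
      refine mul_le_mul_of_nonneg_right (mul_le_mul_of_nonneg_right ?_ hKpos.le) h2M₀pos.le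
      linarith [abs_nonneg C₃]
    have h3 : (|C₃| * K * 2 ^ M₀ * N₃) / D ≤ P / D := by gcongr
    have h4 : P / D ≤ ε / 4 := by
      rw [div_le_div_iff₀ hDpos (by norm_num : (0:ℝ) < 4)]
      have h5 : 4 * P / ε ≤ D := by linarith
      have h6 : 4 * P ≤ D * ε := (div_le_iff₀ hε).mp h5
      linarith
    linarith
  calc |∫ x, f (w, t) x * g₁ x| ≤ ∫ x, |f (w, t) x * g₁ x| := hi1
    _ ≤ ∫ x, coeff * |g₁ x| := hi2
    _ = coeff * N₃ := hi3
    _ < ε / 2 := hfin
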